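/- Let M be a sound MUL-tree on X and let u, v be vertices of M. Then u ∼ v if and only if the directed paths Ψ_{F(M)}⁻¹(u) and Ψ_{F(M)}⁻¹(v) in F(M) have the same end vertex (which is necessarily a tree vertex of F(M)). -/

import Mathlib

/- ------------------------------------------------------------------
Common combinatorial framework for phylogenetic networks, MUL-trees,
un-fold and fold-up operations, following Huber--Moulton--Scornavacca--
Steel and the paper "Three applications of un-fold/fold-up operations
for stable phylogenetic networks".

A `Net` is a rooted directed multigraph: `arcs u v` records the number
of parallel arcs from `u` to `v`.  Directed walks are recorded as lists
of *arc tokens* `(u, v, i)` (the `i`-th parallel arc from `u` to `v`),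
so that parallel arcs give rise to different directed paths.
------------------------------------------------------------------- -/

open Classical

universe u v w

namespace Phylo

/-- A rooted directed multigraph on the vertex type `V`:  `arcs u v` is the
number of parallel arcs from `u` to `v`, `verts` is the vertex set and
`root` the root. -/
structure Net (V : Type u) where
  verts : Set V
  arcs : V → V → ℕ
  root : V

/-- An arc token: `(u, v, i)` stands for the `i`-th parallel arc from `u` to `v`. -/
abbrev Arc (V : Type u) := V × V × ℕ

namespace Net

variable {V : Type u}

/-- The arc token `a` is a genuine arc of `N`. -/
def okArc (N : Net V) (a : Arc V) : Prop :=
  a.1 ∈ N.verts ∧ a.2.1 ∈ N.verts ∧ a.2.2 < N.arcs a.1 a.2.1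

/-- `l` is a directed walk (possibly trivial) starting at the vertex `u`,
recorded as the list of its arc tokens. -/
def WalkFrom (N : Net V) (u : V) (l : List (Arc V)) : Prop :=
  u ∈ N.verts ∧ (∀ a ∈ l, N.okArc a) ∧
    List.Chain' (fun a b : Arc V => a.2.1 = b.1) l ∧
    ∀ a ∈ l.head?, (a : Arc V).1 = u

/-- The end vertex of the walk `l` starting at `u`. -/
def endOf (u : V) (l : List (Arc V)) : V := (l.getLastD (u, u, 0)).2.1

/-- The list of vertices visited by a walk `l` starting at `u`. -/
def walkVerts (u : V) (l : List (Arc V)) : List V := u :: l.map (fun a => a.2.1)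

/-- The inner (non-endpoint) vertices of a walk `l` starting at `u`. -/
def innerVerts (u : V) (l : List (Arc V)) : List V := ((walkVerts u l).dropLast).drop 1

/-- `w` is *below* `u` (there is a directed path from `u` to `w`; every
vertex is below itself).  Equivalently, `u` is an *ancestor* of `w`. -/
def Reaches (N : Net V) (u w : V) : Prop := ∃ l, N.WalkFrom u l ∧ endOf u l = w

/-- The indegree of a vertex (counting parallel arcs). -/
noncomputable def inDeg (N : Net V) (v : V) : ℕ := ∑ᶠ u, N.arcs u v

/-- The outdegree of a vertex (counting parallel arcs). -/
noncomputable def outDeg (N : Net V) (v : V) : ℕ := ∑ᶠ u, N.arcs v u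

/-- A leaf is a vertex of outdegree zero. -/
def IsLeaf (N : Net V) (v : V) : Prop := v ∈ N.verts ∧ N.outDeg v = 0

/-- An interior vertex is a non-leaf vertex. -/
def IsInterior (N : Net V) (v : V) : Prop := v ∈ N.verts ∧ N.outDeg v ≠ 0

/-- A tree vertex is a vertex of indegree at most one. -/
def IsTreeVert (N : Net V) (v : V) : Prop := v ∈ N.verts ∧ N.inDeg v ≤ 1

/-- A hybrid vertex is a vertex of indegree at least two. -/
def IsHybrid (N : Net V) (v : V) : Prop := v ∈ N.verts ∧ 2 ≤ N.inDeg v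

/-- The one-step arc relation. -/
def ArcRel (N : Net V) (u v : V) : Prop := 0 < N.arcs u v

/-- `N` contains no directed cycle. -/
def Acyclic (N : Net V) : Prop := ∀ v, ¬ Relation.TransGen N.ArcRel v v

/-- A rooted connected pseudoDAG: a finite rooted directed (multi)graph with
no directed cycles in which every vertex is reachable from the root. -/
structure IsPseudoDAG (N : Net V) : Prop where
  finite : N.verts.Finite
  rootMem : N.root ∈ N.verts
  arcMem : ∀ u v, N.arcs u v ≠ 0 → u ∈ N.verts ∧ v ∈ N.verts
  acyclic : N.Acyclic
  connected : ∀ v ∈ N.verts, N.Reaches N.root v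

/-- An `X`-network: a rooted connected pseudoDAG whose leaf set is `X`, where
the root has indegree zero, every non-leaf tree vertex has outdegree two,
every hybrid vertex has outdegree one, and every leaf has total degree one. -/
structure IsXNetwork (N : Net V) (X : Set V) extends IsPseudoDAG N : Prop where
  rootInDeg : N.inDeg N.root = 0
  leafSet : ∀ v, N.IsLeaf v ↔ v ∈ X
  treeOutDeg : ∀ v ∈ N.verts, N.inDeg v ≤ 1 → N.outDeg v ≠ 0 → N.outDeg v = 2
  hybridOutDeg : ∀ v ∈ N.verts, 2 ≤ N.inDeg v → N.outDeg v = 1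
  leafInDeg : ∀ v ∈ X, N.inDeg v = 1

/-- No parallel arcs. -/
def NoParallel (N : Net V) : Prop := ∀ u v, N.arcs u v ≤ 1

/-- A phylogenetic network on `X`: an `X`-network without parallel arcs. -/
structure IsPhyloNetwork (N : Net V) (X : Set V) extends IsXNetwork N X : Prop where
  noParallel : N.NoParallel

/-- A phylogenetic tree on `X`: a phylogenetic network with no hybrid vertices. -/
structure IsPhyloTree (N : Net V) (X : Set V) extends IsPhyloNetwork N X : Prop where
  noHybrid : ∀ v, ¬ N.IsHybrid v

/-- A vertex with indegree one and outdegree one (to be suppressed). -/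
def Suppressible (N : Net V) (v : V) : Prop :=
  v ∈ N.verts ∧ N.inDeg v = 1 ∧ N.outDeg v = 1

/-- The graph obtained from `N` by suppressing all vertices of indegree one and
outdegree one: kept vertices are the non-suppressible ones, and the number of
arcs from `u` to `w` is the number of directed paths from `u` to `w` in `N`
all of whose inner vertices are suppressible. -/
noncomputable def suppr (N : Net V) : Net V where
  verts := {v ∈ N.verts | ¬ N.Suppressible v}
  arcs := fun u w =>
    if u ∈ N.verts ∧ ¬ N.Suppressible u ∧ w ∈ N.verts ∧ ¬ N.Suppressible w then
      Set.ncard {l : List (Arc V) | N.WalkFrom u l ∧ l ≠ [] ∧ endOf u l = w ∧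
        ∀ x ∈ innerVerts u l, N.Suppressible x}
    else 0
  root := N.root

/-- `g` realizes an isomorphism of rooted multigraphs from `N` to `N'`. -/
def NetIsoVia {W : Type w} (N : Net V) (N' : Net W) (g : V → W) : Prop :=
  Set.BijOn g N.verts N'.verts ∧
    (∀ u ∈ N.verts, ∀ v ∈ N.verts, N'.arcs (g u) (g v) = N.arcs u v) ∧
    g N.root = N'.root

/-- `w` is a vertex-stable ancestor of the leaf `x`: `w` is an interior vertex
lying on every directed path from the root to `x`. -/
def IsVSAncestor (N : Net V) (w x : V) : Prop :=
  N.IsInterior w ∧ N.IsLeaf x ∧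
    ∀ l, N.WalkFrom N.root l → endOf N.root l = x → w ∈ walkVerts N.root l

/-- `N` is tree-child: every interior vertex has a child that is a tree vertex. -/
def TreeChild (N : Net V) : Prop :=
  ∀ v, N.IsInterior v → ∃ u, 0 < N.arcs v u ∧ N.IsTreeVert u

/-- `N` is compressed: no arc has both its tail and its head hybrid. -/
def Compressed (N : Net V) : Prop :=
  ∀ u v, 0 < N.arcs u v → ¬(N.IsHybrid u ∧ N.IsHybrid v)

/-- `N` is reticulation-visible: every hybrid vertex is a vertex-stable
ancestor of some leaf. -/
def RetVisible (N : Net V) (X : Set V) : Prop :=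
  ∀ h, N.IsHybrid h → ∃ x ∈ X, N.IsVSAncestor h x

/-- The set of arc tokens used by a walk. -/
def arcsOf (l : List (Arc V)) : Set (Arc V) := {a | a ∈ l}

/-- The union of the directed paths `p₁` and `p₂` contains a subgraph that is
a reticulation cycle of `N`, i.e. the union of two arc-disjoint non-trivial
directed paths of `N` with the same start vertex and the same end vertex. -/
def ContainsRetCycle (N : Net V) (p₁ p₂ : List (Arc V)) : Prop :=
  ∃ (q₁ q₂ : List (Arc V)) (s e : V),
    N.WalkFrom s q₁ ∧ N.WalkFrom s q₂ ∧ q₁ ≠ [] ∧ q₂ ≠ [] ∧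
    endOf s q₁ = e ∧ endOf s q₂ = e ∧
    Disjoint (arcsOf q₁) (arcsOf q₂) ∧
    arcsOf q₁ ∪ arcsOf q₂ ⊆ arcsOf p₁ ∪ arcsOf p₂

/-- The set of vertices having a descendant in `Y`. -/
def keepSet (N : Net V) (Y : Set V) : Set V := {v ∈ N.verts | ∃ y ∈ Y, N.Reaches v y}

/-- The result of the leaf-removing operations applied to all leaves outside
`Y`: restrict to the vertices having a descendant in `Y` and suppress all
resulting vertices of indegree one and outdegree one. -/
noncomputable def restrictNet (N : Net V) (Y : Set V) : Net V :=
  Net.suppr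
    { verts := N.keepSet Y
      arcs := fun u w => if u ∈ N.keepSet Y ∧ w ∈ N.keepSet Y then N.arcs u w else 0
      root := N.root }

end Net

/-- A labelled rooted directed multigraph: the data of a MUL-tree on the
label set: `lab x` is the set of leaves labelled `x`. -/
structure LNet (V : Type u) (L : Type v) extends Net V where
  lab : L → Set V

namespace LNet

variable {V : Type u} {L : Type v}

/-- `M` is a MUL-tree on `X`: a rooted tree whose root has indegree `0`, with
no vertex of indegree one and outdegree one, in which every leaf carries
exactly one label from `X` and every label of `X` occurs. -/
structure IsMulTree (M : LNet V L) (X : Set L) : Prop where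
  pseudo : M.toNet.IsPseudoDAG
  rootInDeg : M.toNet.inDeg M.root = 0
  inDegOne : ∀ v ∈ M.verts, v ≠ M.root → M.toNet.inDeg v = 1
  noSupp : ∀ v, ¬ M.toNet.Suppressible v
  labLeaf : ∀ x ∈ X, ∀ l ∈ M.lab x, M.toNet.IsLeaf l
  labNonempty : ∀ x ∈ X, (M.lab x).Nonempty
  labCover : ∀ l, M.toNet.IsLeaf l → ∃! x, x ∈ X ∧ l ∈ M.lab x
  labOff : ∀ x, x ∉ X → M.lab x = ∅

/-- The set of vertices below `v`. -/
def belowSet (M : LNet V L) (v : V) : Set V := {w | M.toNet.Reaches v w}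

/-- The subMUL-tree `M_v` of `M` rooted at the vertex `v` (delete the incoming
arc of `v` and restrict the labelling). -/
noncomputable def subAt (M : LNet V L) (v : V) : LNet V L where
  verts := M.belowSet v
  arcs := fun u w => if u ∈ M.belowSet v ∧ w ∈ M.belowSet v then M.arcs u w else 0
  root := v
  lab := fun x => M.lab x ∩ M.belowSet v

/-- `η` realizes an isomorphism of MUL-trees (same label type). -/
def MulIsoVia {V' : Type w} (M : LNet V L) (M' : LNet V' L) (η : V → V') : Prop :=
  Set.BijOn η M.verts M'.verts ∧
    (∀ u ∈ M.verts, ∀ w ∈ M.verts, M'.arcs (η u) (η w) = M.arcs u w) ∧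
    η M.root = M'.root ∧
    ∀ x : L, η '' (M.lab x ∩ M.verts) = M'.lab x ∩ M'.verts

/-- Two labelled trees (on the same label type) are isomorphic. -/
def MulIso {V' : Type w} (M : LNet V L) (M' : LNet V' L) : Prop := ∃ η, MulIsoVia M M' η

/-- `η` realizes an isomorphism of MUL-trees on `X` modulo the label
translation `e`. -/
def MulIsoRelVia {V' : Type w} {L' : Type*} (M : LNet V L) (X : Set L)
    (M' : LNet V' L') (e : L → L') (η : V → V') : Prop :=
  Set.BijOn η M.verts M'.verts ∧
    (∀ u ∈ M.verts, ∀ w ∈ M.verts, M'.arcs (η u) (η w) = M.arcs u w) ∧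
    η M.root = M'.root ∧
    ∀ x ∈ X, η '' (M.lab x ∩ M.verts) = M'.lab (e x) ∩ M'.verts

/-- The equivalence relation `∼`: `u ∼ w` iff `u = w` or the subMUL-trees
`M_u` and `M_w` are isomorphic. -/
def Sim (M : LNet V L) (u w : V) : Prop := u = w ∨ MulIso (M.subAt u) (M.subAt w)

/-- The `∼`-equivalence class of `w`; the map `eqClass M : V(M) → V(M)/∼`
plays the role of the projection `p_M` onto the quotient. -/
def eqClass (M : LNet V L) (w : V) : Set V := {u ∈ M.verts | M.Sim u w}

/-- The quotient `V(M)/∼`, realized as the set of `∼`-equivalence classes. -/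
def classSet (M : LNet V L) : Set (Set V) := M.eqClass '' M.verts

/-- `c` is a `∼`-equivalence class of `M`. -/
def IsClassOf (M : LNet V L) (c : Set V) : Prop := ∃ w ∈ M.verts, c = M.eqClass w

/-- The class `c` gets a hybrid vertex above it in the fold-up of `M`:
some (equivalently, any) member of `c` has its parent in a strictly smaller
`∼`-class. -/
def ClassHyb (M : LNet V L) (c : Set V) : Prop :=
  ∃ w ∈ M.verts, c = M.eqClass w ∧ ∃ u, 0 < M.arcs u w ∧ (M.eqClass u).ncard < c.ncard

/-- `d` is the class of a parent of a member of `c`. -/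
def IsParentClassOf (M : LNet V L) (d c : Set V) : Prop :=
  ∃ u w, 0 < M.arcs u w ∧ d = M.eqClass u ∧ c = M.eqClass w

/-- The number of children inside `c` of a member of `d`. -/
noncomputable def childMult (M : LNet V L) (d c : Set V) : ℕ :=
  sSup {n : ℕ | ∃ u ∈ d, n = ∑ᶠ w ∈ c, M.arcs u w}

/-- The fold-up `F(M)` of the MUL-tree `M`: the `X`-network obtained by
repeatedly identifying all maximal inextendible subMUL-trees, subdividing
the incoming arcs of their roots and identifying the subdivision vertices.
Concretely, its tree vertices are the `∼`-classes of `M`, there is a hybrid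
vertex above each class whose members have parents in a strictly smaller
class, and arcs are induced by the arcs of `M`. -/
noncomputable def foldUp (M : LNet V L) : Net (Set V ⊕ Set V) where
  verts := (Sum.inl '' {c | M.IsClassOf c}) ∪
    (Sum.inr '' {c | M.IsClassOf c ∧ M.ClassHyb c})
  arcs := fun a b =>
    match a, b with
    | Sum.inl d, Sum.inl c =>
        if M.IsClassOf d ∧ M.IsClassOf c ∧ ¬ M.ClassHyb c ∧ M.IsParentClassOf d c
        then 1 else 0
    | Sum.inl d, Sum.inr c =>
        if M.IsClassOf d ∧ M.IsClassOf c ∧ M.ClassHyb c ∧ M.IsParentClassOf d c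
        then M.childMult d c else 0
    | Sum.inr c, Sum.inl c' =>
        if c' = c ∧ M.IsClassOf c ∧ M.ClassHyb c then 1 else 0
    | Sum.inr _, Sum.inr _ => 0
  root := Sum.inl (M.eqClass M.root)

/-- The `∼`-class of the leaves labelled `x`. -/
def labClass (M : LNet V L) (x : L) : Set V := {w ∈ M.verts | ∃ l ∈ M.lab x, M.Sim w l}

/-- The leaf set of the fold-up of `M`, identified with `X`. -/
def foldX (M : LNet V L) (X : Set L) : Set (Set V ⊕ Set V) :=
  (fun x => Sum.inl (M.labClass x)) '' X

/-- A MUL-tree is sound if its fold-up is a phylogenetic network. -/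
def IsSound (M : LNet V L) (X : Set L) : Prop :=
  M.IsMulTree X ∧ Net.IsPhyloNetwork M.foldUp (M.foldX X)

/-- An `X`-set of `M`: a set of leaves containing exactly one leaf labelled
`x` for every `x ∈ X`. -/
def IsXSet (M : LNet V L) (X : Set L) (C : Set V) : Prop :=
  (∀ l ∈ C, M.toNet.IsLeaf l) ∧ ∀ x ∈ X, ∃! l, l ∈ C ∧ l ∈ M.lab x

/-- `r` is the last common ancestor of the elements of `C`. -/
def IsLca (M : LNet V L) (r : V) (C : Set V) : Prop :=
  r ∈ M.verts ∧ (∀ c ∈ C, M.toNet.Reaches r c) ∧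
    ∀ r' ∈ M.verts, (∀ c ∈ C, M.toNet.Reaches r' c) → M.toNet.Reaches r' r

/-- The last common ancestor `r_C` of the elements of `C`. -/
noncomputable def lcaOf [Nonempty V] (M : LNet V L) (C : Set V) : V :=
  Classical.epsilon fun r => M.IsLca r C

/-- The vertex set of `M_C⁺`: all vertices on a directed path from
`lca(C)` to a leaf in `C`. -/
def subPlusVerts [Nonempty V] (M : LNet V L) (C : Set V) : Set V :=
  {v | M.toNet.Reaches (M.lcaOf C) v ∧ ∃ c ∈ C, M.toNet.Reaches v c}

/-- The tree `M_C⁺` spanned by the leaves in `C`; the canonical injection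
`ξ_C⁺ : V(M_C⁺) → V(M)` is the set-inclusion `subPlusVerts M C ⊆ V`, so that
the map `ξ̄_C⁺ = p_M ∘ ξ_C⁺` is realized by `eqClass M` restricted to
`subPlusVerts M C`. -/
noncomputable def subPlus [Nonempty V] (M : LNet V L) (C : Set V) : Net V where
  verts := M.subPlusVerts C
  arcs := fun u w => if u ∈ M.subPlusVerts C ∧ w ∈ M.subPlusVerts C then M.arcs u w else 0
  root := M.lcaOf C

/-- The phylogenetic tree `M_C` induced by the `X`-set `C`: suppress all
vertices of indegree one and outdegree one in `M_C⁺`. -/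
noncomputable def mC [Nonempty V] (M : LNet V L) (C : Set V) : Net V := (M.subPlus C).suppr

/-- The set `V(M)^C`: the vertex `r_C` together with all vertices `v` such
that no vertex below `v` is `∼`-equivalent to `r_C`. -/
def vmc [Nonempty V] (M : LNet V L) (C : Set V) : Set V :=
  insert (M.lcaOf C) {v ∈ M.verts | ∀ u, M.toNet.Reaches v u → ¬ M.Sim u (M.lcaOf C)}

/-- Vertices of `M` having a descendant leaf labelled by an element of `Y`. -/
def keepSet (M : LNet V L) (Y : Set L) : Set V :=
  {v ∈ M.verts | ∃ w, M.toNet.Reaches v w ∧ ∃ y ∈ Y, w ∈ M.lab y}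

/-- The MUL-tree `M_Y` obtained from `M` by the leaf-removing operation:
remove all leaves labelled outside `Y` (together with everything having no
leaf labelled in `Y` below it) and suppress all resulting vertices of
indegree one and outdegree one. -/
noncomputable def restrictMul (M : LNet V L) (Y : Set L) : LNet V L where
  toNet := Net.suppr
    { verts := M.keepSet Y
      arcs := fun u w => if u ∈ M.keepSet Y ∧ w ∈ M.keepSet Y then M.arcs u w else 0
      root := M.root }
  lab := fun y => if y ∈ Y then M.lab y else ∅

end LNet

namespace Net

variable {V : Type u}

/-- The vertex set of the un-fold `U(N)` of `N`: the set `π⁻(N)` of directed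
paths of `N` starting at the root and ending in a tree vertex.  (The
bijection `Ψ_N : π⁻(N) → V(U(N))` is thereby realized as the identity.) -/
def unfoldVerts (N : Net V) : Set (List (Arc V)) :=
  {p | N.WalkFrom N.root p ∧ N.IsTreeVert (endOf N.root p)}

/-- The un-fold `U(N)` of `N`, a MUL-tree on `X`: vertices are the directed
paths from the root ending in tree vertices, arcs correspond to extending
such a path by a single arc followed by a (possibly empty) run of hybrid
vertices, and the leaves labelled `x ∈ X` are the paths ending in `x`. -/
noncomputable def unfoldNet (N : Net V) (X : Set V) : LNet (List (Arc V)) V where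
  verts := unfoldVerts N
  arcs := fun p q =>
    if p ∈ unfoldVerts N ∧ q ∈ unfoldVerts N ∧
        ∃ r, r ≠ [] ∧ q = p ++ r ∧ ∀ a ∈ r.dropLast, N.IsHybrid (a : Arc V).2.1
    then 1 else 0
  root := []
  lab := fun x => if x ∈ X then {p ∈ unfoldVerts N | endOf N.root p = x} else ∅

end Net

/-- `N` is a stable phylogenetic network on `X`: `N` is a phylogenetic
network isomorphic to the fold-up of its un-fold, via an isomorphism fixing
`X` pointwise (i.e. sending each leaf `x` to the leaf of `F(U(N))`
corresponding to `x`). -/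
def IsStable {V : Type u} (N : Net V) (X : Set V) : Prop :=
  Net.IsPhyloNetwork N X ∧
    ∃ g, Net.NetIsoVia N (Net.unfoldNet N X).foldUp g ∧
      ∀ x ∈ X, g x = Sum.inl ((Net.unfoldNet N X).labClass x)

/-- `T` is endorsed by the MUL-tree `M` via the `X`-set `C`, the isomorphism
`T ≅ M_C` being realized by `σ` (which sends each `x ∈ X` to the unique leaf
of `C` labelled `x`). -/
def EndorsedVia {V : Type u} {W : Type w} [Nonempty W] (T : Net V) (X : Set V)
    (M : LNet W V) (C : Set W) (σ : V → W) : Prop :=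
  M.IsXSet X C ∧ Net.NetIsoVia T (M.mC C) σ ∧ ∀ x ∈ X, σ x ∈ C ∧ σ x ∈ M.lab x

/-- `T` is endorsed by the MUL-tree `M` via the `X`-set `C`. -/
def Endorsed {V : Type u} {W : Type w} [Nonempty W] (T : Net V) (X : Set V)
    (M : LNet W V) (C : Set W) : Prop :=
  ∃ σ, EndorsedVia T X M C σ

/-- `N'` is a subgraph of `N` with leaf set `X` which is (an isomorphic copy,
via the identity on `X`, of) a subdivision of `T`: suppressing all vertices
of indegree one and outdegree one in `N'` yields a tree isomorphic to `T`
via an isomorphism `g` fixing `X` pointwise. -/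
def IsDisplayWitness {V : Type u} (N : Net V) (X : Set V) (T : Net V)
    (N' : Net V) (g : V → V) : Prop :=
  N'.verts ⊆ N.verts ∧ (∀ u v, N'.arcs u v ≤ N.arcs u v) ∧
    N'.root ∈ N'.verts ∧ (∀ v ∈ N'.verts, N'.Reaches N'.root v) ∧
    (∀ v, N'.IsLeaf v ↔ v ∈ X) ∧
    Net.NetIsoVia T N'.suppr g ∧ ∀ x ∈ X, g x = x

/-- The phylogenetic tree `T` is displayed by `N`. -/
def Displays {V : Type u} (N : Net V) (X : Set V) (T : Net V) : Prop :=
  ∃ N' g, IsDisplayWitness N X T N' g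

/-- The phylogenetic tree `T` is strongly displayed by `N`: it is displayed
via a subdivision whose root is the root of `N`. -/
def StronglyDisplays {V : Type u} (N : Net V) (X : Set V) (T : Net V) : Prop :=
  ∃ N' g, IsDisplayWitness N X T N' g ∧ N'.root = N.root

/-- `G` is a rooted tree. -/
structure IsRootedTree {V : Type u} (G : Net V) : Prop where
  pseudo : G.IsPseudoDAG
  rootInDeg : G.inDeg G.root = 0
  inDegOne : ∀ v ∈ G.verts, v ≠ G.root → G.inDeg v = 1

/-- `T'` is a subdivision of `T` (with the identity on `X`): `T'` is a rooted
tree which, after suppressing all vertices of indegree one and outdegree one,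
is isomorphic to `T` via an isomorphism fixing `X` pointwise. -/
def IsSubdivisionOf {V : Type u} (T' T : Net V) (X : Set V) : Prop :=
  IsRootedTree T' ∧ ∃ g, Net.NetIsoVia T T'.suppr g ∧ ∀ x ∈ X, g x = x

/-- `T` is a base tree for `N`: `N` can be obtained from `T` by subdividing
some arcs of `T`, adding arcs between the subdivision vertices without
creating parallel arcs or directed cycles, and suppressing all subdivision
vertices still of indegree one and outdegree one. -/
def IsBaseTreeFor {V : Type u} (T : Net V) (X : Set V) (N : Net V) : Prop :=
  ∃ T' G : Net V,
    IsSubdivisionOf T' T X ∧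
    G.verts = T'.verts ∧ G.root = T'.root ∧
    (∀ u v, T'.arcs u v ≤ G.arcs u v) ∧
    (∀ u v, T'.arcs u v ≠ G.arcs u v → T'.Suppressible u ∧ T'.Suppressible v) ∧
    G.NoParallel ∧ G.Acyclic ∧
    ∃ h, Net.NetIsoVia G.suppr N h ∧ ∀ x ∈ X, h x = x

end Phylo
namespace Phylo

/-! ### Auxiliary lemmas for Statement 0 -/

section WalkLemmas

variable {V : Type u}

lemma endOf_nil (u : V) : Net.endOf u ([] : List (Arc V)) = u := rfl

lemma endOf_cons (u : V) (a : Arc V) (l : List (Arc V)) :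
    Net.endOf u (a :: l) = Net.endOf a.2.1 l := by
  cases l with
  | nil => rfl
  | cons b l =>
      show ((a :: b :: l).getLastD (u, u, 0)).2.1 = ((b :: l).getLastD (a.2.1, a.2.1, 0)).2.1
      simp only [List.getLastD_cons]

lemma endOf_append (u : V) (l₁ l₂ : List (Arc V)) :
    Net.endOf u (l₁ ++ l₂) = Net.endOf (Net.endOf u l₁) l₂ := by
  induction l₁ generalizing u with
  | nil => simp [endOf_nil]
  | cons a l ih => rw [List.cons_append, endOf_cons, endOf_cons, ih]

lemma walkFrom_nil (N : Net V) (u : V) : N.WalkFrom u [] ↔ u ∈ N.verts := by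
  simp [Net.WalkFrom, List.Chain']

lemma walkFrom_cons (N : Net V) (u : V) (a : Arc V) (l : List (Arc V)) :
    N.WalkFrom u (a :: l) ↔
      u ∈ N.verts ∧ a.1 = u ∧ N.okArc a ∧ N.WalkFrom a.2.1 l := by
  constructor
  · rintro ⟨hu, hok, hch, hhd⟩
    simp only [List.Chain'] at hch
    rw [List.isChain_cons] at hch
    refine ⟨hu, hhd a rfl, hok a (by simp), (hok a (by simp)).2.1, ?_, hch.2, ?_⟩
    · intro b hb; exact hok b (by simp [hb])
    · intro b hb; exact (hch.1 b hb).symm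
  · rintro ⟨hu, ha1, hok, hv, hok', hch, hhd⟩
    refine ⟨hu, ?_, ?_, ?_⟩
    · intro b hb; rcases List.mem_cons.1 hb with rfl | hb
      · exact hok
      · exact hok' b hb
    · simp only [List.Chain']
      rw [List.isChain_cons]
      exact ⟨fun b hb => (hhd b hb).symm, hch⟩
    · intro b hb; simp only [List.head?_cons, Option.mem_def, Option.some.injEq] at hb
      rw [← hb]; exact ha1

lemma endOf_mem_verts {N : Net V} {u : V} {l : List (Arc V)} (h : N.WalkFrom u l) :
    Net.endOf u l ∈ N.verts := by
  induction l generalizing u with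
  | nil => exact h.1
  | cons a l ih =>
      rw [walkFrom_cons] at h
      rw [endOf_cons]
      exact ih h.2.2.2

lemma walkFrom_append (N : Net V) (u : V) (l₁ l₂ : List (Arc V)) :
    N.WalkFrom u (l₁ ++ l₂) ↔
      N.WalkFrom u l₁ ∧ N.WalkFrom (Net.endOf u l₁) l₂ := by
  induction l₁ generalizing u with
  | nil =>
      simp only [List.nil_append, endOf_nil, walkFrom_nil]
      exact ⟨fun h => ⟨h.1, h⟩, fun h => h.2⟩
  | cons a l ih =>
      rw [List.cons_append, walkFrom_cons, walkFrom_cons, endOf_cons, ih]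
      tauto

lemma reaches_mem_verts {N : Net V} {u w : V} (h : N.Reaches u w) : w ∈ N.verts := by
  obtain ⟨l, hl, rfl⟩ := h
  exact endOf_mem_verts hl

lemma reaches_self {N : Net V} {u : V} (hu : u ∈ N.verts) : N.Reaches u u :=
  ⟨[], (walkFrom_nil N u).2 hu, rfl⟩

lemma reaches_trans {N : Net V} {u w z : V} (h₁ : N.Reaches u w) (h₂ : N.Reaches w z) :
    N.Reaches u z := by
  obtain ⟨l₁, hl₁, rfl⟩ := h₁
  obtain ⟨l₂, hl₂, rfl⟩ := h₂
  exact ⟨l₁ ++ l₂, (walkFrom_append N u l₁ l₂).2 ⟨hl₁, hl₂⟩, endOf_append _ _ _⟩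

end WalkLemmas

section IsoLemmas

variable {V : Type u} {W : Type w}

/-- The image of an arc token under a vertex map. -/
def mapArc (θ : V → W) (a : Arc V) : Arc W := (θ a.1, θ a.2.1, a.2.2)

lemma iso_walk {A : Net V} {B : Net W} {θ : V → W}
    (hbij : Set.BijOn θ A.verts B.verts)
    (harcs : ∀ u ∈ A.verts, ∀ v ∈ A.verts, B.arcs (θ u) (θ v) = A.arcs u v)
    {u : V} {l : List (Arc V)} (h : A.WalkFrom u l) :
    B.WalkFrom (θ u) (l.map (mapArc θ)) ∧
      Net.endOf (θ u) (l.map (mapArc θ)) = θ (Net.endOf u l) := by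
  induction l generalizing u with
  | nil => exact ⟨(walkFrom_nil B (θ u)).2 (hbij.mapsTo h.1), rfl⟩
  | cons a l ih =>
      rw [walkFrom_cons] at h
      obtain ⟨hu, ha1, ⟨h1, h2, h3⟩, hw⟩ := h
      have hih := ih hw
      constructor
      · rw [List.map_cons, walkFrom_cons]
        exact ⟨hbij.mapsTo hu, by simp only [mapArc, ha1],
          ⟨hbij.mapsTo h1, hbij.mapsTo h2, by
            show a.2.2 < B.arcs (θ a.1) (θ a.2.1); rwa [harcs _ h1 _ h2]⟩, hih.1⟩
      · rw [List.map_cons, endOf_cons]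
        show Net.endOf (θ a.2.1) (l.map (mapArc θ)) = _
        rw [hih.2, endOf_cons]

lemma iso_reaches {A : Net V} {B : Net W} {θ : V → W}
    (hbij : Set.BijOn θ A.verts B.verts)
    (harcs : ∀ u ∈ A.verts, ∀ v ∈ A.verts, B.arcs (θ u) (θ v) = A.arcs u v)
    {u w : V} (h : A.Reaches u w) : B.Reaches (θ u) (θ w) := by
  obtain ⟨l, hl, rfl⟩ := h
  exact ⟨l.map (mapArc θ), (iso_walk hbij harcs hl).1, (iso_walk hbij harcs hl).2⟩

lemma inv_iso {A : Net V} {B : Net W} {θ : V → W} [Nonempty V]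
    (hbij : Set.BijOn θ A.verts B.verts)
    (harcs : ∀ u ∈ A.verts, ∀ v ∈ A.verts, B.arcs (θ u) (θ v) = A.arcs u v) :
    let σ := Function.invFunOn θ A.verts
    Set.BijOn σ B.verts A.verts ∧
      (∀ a ∈ A.verts, σ (θ a) = a) ∧
      (∀ b ∈ B.verts, θ (σ b) = b) ∧
      (∀ u ∈ B.verts, ∀ v ∈ B.verts, A.arcs (σ u) (σ v) = B.arcs u v) := by
  intro σ
  have hleft : ∀ a ∈ A.verts, σ (θ a) = a := fun a ha =>
    hbij.injOn.leftInvOn_invFunOn ha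
  have hright : ∀ b ∈ B.verts, θ (σ b) = b := fun b hb =>
    Function.invFunOn_eq (hbij.surjOn hb)
  have hmem : ∀ b ∈ B.verts, σ b ∈ A.verts := fun b hb =>
    Function.invFunOn_mem (hbij.surjOn hb)
  refine ⟨⟨hmem, ?_, ?_⟩, hleft, hright, ?_⟩
  · intro b₁ h₁ b₂ h₂ he
    have := congrArg θ he
    rwa [hright _ h₁, hright _ h₂] at this
  · intro a ha
    exact ⟨θ a, hbij.mapsTo ha, hleft a ha⟩
  · intro x hx y hy
    rw [← harcs _ (hmem x hx) _ (hmem y hy), hright _ hx, hright _ hy]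

lemma iso_image_below {A : Net V} {B : Net W} {θ : V → W}
    (hbij : Set.BijOn θ A.verts B.verts)
    (harcs : ∀ u ∈ A.verts, ∀ v ∈ A.verts, B.arcs (θ u) (θ v) = A.arcs u v)
    {u : V} (hu : u ∈ A.verts) :
    θ '' {w | A.Reaches u w} = {w | B.Reaches (θ u) w} := by
  have : Nonempty V := ⟨u⟩
  obtain ⟨hbij', hleft, hright, harcs'⟩ := inv_iso hbij harcs
  apply Set.Subset.antisymm
  · rintro _ ⟨w, hw, rfl⟩
    exact iso_reaches hbij harcs hw
  · intro b hb
    have hbv : b ∈ B.verts := reaches_mem_verts hb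
    refine ⟨Function.invFunOn θ A.verts b, ?_, hright _ hbv⟩
    have := iso_reaches hbij' harcs' hb
    rwa [hleft _ hu] at this

end IsoLemmas

section MulIsoLemmas

variable {V : Type u} {L : Type v} {W : Type w}

lemma belowSet_subset (M : LNet V L) (w : V) : M.belowSet w ⊆ M.verts :=
  fun _ ha => reaches_mem_verts ha

lemma image_inv_image {θ : V → W} {s : Set V} [Nonempty V]
    (hleft : ∀ a ∈ s, Function.invFunOn θ s (θ a) = a) {S : Set V} (hS : S ⊆ s) :
    Function.invFunOn θ s '' (θ '' S) = S := by
  rw [← Set.image_comp]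
  have h : Set.EqOn (Function.invFunOn θ s ∘ θ) id S := fun a ha => hleft a (hS ha)
  rw [h.image_eq, Set.image_id]

lemma mulIso_refl (A : LNet V L) : LNet.MulIso A A :=
  ⟨id, Set.bijOn_id _, fun u _ w _ => rfl, rfl, fun x => by simp⟩

lemma mulIso_trans {U' : Type*} {A : LNet V L} {B : LNet W L} {C : LNet U' L}
    (h₁ : LNet.MulIso A B) (h₂ : LNet.MulIso B C) : LNet.MulIso A C := by
  obtain ⟨η, hηb, hηa, hηr, hηl⟩ := h₁
  obtain ⟨τ, hτb, hτa, hτr, hτl⟩ := h₂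
  refine ⟨τ ∘ η, hτb.comp hηb, ?_, ?_, ?_⟩
  · intro a ha b hb
    rw [Function.comp_apply, Function.comp_apply, hτa _ (hηb.mapsTo ha) _ (hηb.mapsTo hb),
      hηa _ ha _ hb]
  · rw [Function.comp_apply, hηr, hτr]
  · intro x
    rw [Set.image_comp, hηl x, hτl x]

lemma mulIso_symm [Nonempty V] {A : LNet V L} {B : LNet W L}
    (hroot : A.root ∈ A.verts) (h : LNet.MulIso A B) : LNet.MulIso B A := by
  obtain ⟨η, hηb, hηa, hηr, hηl⟩ := h
  obtain ⟨hbij', hleft, hright, harcs'⟩ := inv_iso (A := A.toNet) (B := B.toNet) hηb hηa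
  refine ⟨Function.invFunOn η A.verts, hbij', harcs', ?_, ?_⟩
  · rw [← hηr, hleft _ hroot]
  · intro x
    rw [← hηl x]
    exact image_inv_image hleft Set.inter_subset_right

lemma sim_symm {M : LNet V L} {u w : V} (hu : u ∈ M.verts) (hw : w ∈ M.verts)
    (h : M.Sim u w) : M.Sim w u := by
  rcases h with rfl | h
  · exact Or.inl rfl
  · have : Nonempty V := ⟨u⟩
    exact Or.inr (mulIso_symm (reaches_self hu) h)

lemma sim_trans {M : LNet V L} {u w z : V} (h₁ : M.Sim u w) (h₂ : M.Sim w z) :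
    M.Sim u z := by
  rcases h₁ with rfl | h₁
  · exact h₂
  · rcases h₂ with rfl | h₂
    · exact Or.inr h₁
    · exact Or.inr (mulIso_trans h₁ h₂)

lemma eqClass_eq_of_sim {M : LNet V L} {u w : V} (hu : u ∈ M.verts) (hw : w ∈ M.verts)
    (h : M.Sim u w) : M.eqClass u = M.eqClass w := by
  ext a
  constructor
  · rintro ⟨ha, hsim⟩
    exact ⟨ha, sim_trans hsim h⟩
  · rintro ⟨ha, hsim⟩
    exact ⟨ha, sim_trans hsim (sim_symm hu hw h)⟩

/-- Transport of subMUL-tree isomorphisms backwards along a labelled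
isomorphism `θ : A → B` (modulo the label translation `e`). -/
lemma subAt_iso_transport {L' : Type*} {A : LNet V L} {B : LNet W L'} {X : Set L}
    {e : L → L'} {θ : V → W}
    (hbij : Set.BijOn θ A.verts B.verts)
    (harcs : ∀ u ∈ A.verts, ∀ v ∈ A.verts, B.arcs (θ u) (θ v) = A.arcs u v)
    (hlab : ∀ x ∈ X, θ '' (A.lab x ∩ A.verts) = B.lab (e x) ∩ B.verts)
    (hAoff : ∀ x ∉ X, A.lab x = ∅)
    {u v : V} (hu : u ∈ A.verts) (hv : v ∈ A.verts)
    (h : LNet.MulIso (B.subAt (θ u)) (B.subAt (θ v))) :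
    LNet.MulIso (A.subAt u) (A.subAt v) := by
  have : Nonempty V := ⟨u⟩
  obtain ⟨hbij', hleft, hright, harcs'⟩ := inv_iso (A := A.toNet) (B := B.toNet) hbij harcs
  set σ := Function.invFunOn θ A.verts with hσ
  obtain ⟨η, hηb, hηa, hηr, hηl⟩ := h
  -- image of belowSets
  have himg : ∀ w ∈ A.verts, θ '' A.belowSet w = B.belowSet (θ w) := by
    intro w hw; exact iso_image_below hbij harcs hw
  have hbelA : ∀ w : V, A.belowSet w ⊆ A.verts := belowSet_subset A
  have hbelB : ∀ w : W, B.belowSet w ⊆ B.verts := belowSet_subset B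
  have hst : ∀ S : Set V, S ⊆ A.verts → σ '' (θ '' S) = S := by
    intro S hS; exact image_inv_image hleft hS
  -- step image lemma
  have hinter : ∀ (x : L) (w : V), A.lab x ∩ A.belowSet w =
      (A.lab x ∩ A.verts) ∩ A.belowSet w := by
    intro x w
    rw [Set.inter_assoc]
    congr 1
    exact (Set.inter_eq_self_of_subset_right (hbelA w)).symm
  have hstep : ∀ x ∈ X, ∀ w ∈ A.verts,
      θ '' (A.lab x ∩ A.belowSet w) = B.lab (e x) ∩ B.belowSet (θ w) := by
    intro x hx w hw
    rw [hinter, hbij.injOn.image_inter Set.inter_subset_right (hbelA w), hlab x hx,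
      himg w hw, Set.inter_assoc]
    congr 1
    exact Set.inter_eq_self_of_subset_right (hbelB (θ w))
  -- the bijections on belowSets
  have hθbij : ∀ w ∈ A.verts, Set.BijOn θ (A.belowSet w) (B.belowSet (θ w)) := by
    intro w hw
    refine ⟨fun a ha => (himg w hw) ▸ Set.mem_image_of_mem θ ha,
      hbij.injOn.mono (hbelA w), fun b hb => ?_⟩
    rw [← himg w hw] at hb; exact hb
  have hσbij : ∀ w ∈ A.verts, Set.BijOn σ (B.belowSet (θ w)) (A.belowSet w) := by
    intro w hw
    refine ⟨?_, hbij'.injOn.mono (hbelB (θ w)), ?_⟩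
    · intro b hb
      rw [← himg w hw] at hb
      obtain ⟨a, ha, rfl⟩ := hb
      rwa [hleft a (hbelA w ha)]
    · intro a ha
      exact ⟨θ a, (himg w hw) ▸ Set.mem_image_of_mem θ ha, hleft a (hbelA w ha)⟩
  -- verts of subAt are belowSets (definitional)
  have hvertsu : (B.subAt (θ u)).verts = B.belowSet (θ u) := rfl
  have hηbij : Set.BijOn η (B.belowSet (θ u)) (B.belowSet (θ v)) := hηb
  refine ⟨σ ∘ η ∘ θ, ?_, ?_, ?_, ?_⟩
  · exact (hσbij v hv).comp (hηbij.comp (hθbij u hu))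
  · -- arcs
    intro a ha b hb
    have ha' : a ∈ A.belowSet u := ha
    have hb' : b ∈ A.belowSet u := hb
    have hθa : θ a ∈ B.belowSet (θ u) := (hθbij u hu).mapsTo ha'
    have hθb : θ b ∈ B.belowSet (θ u) := (hθbij u hu).mapsTo hb'
    have hηa' : η (θ a) ∈ B.belowSet (θ v) := hηbij.mapsTo hθa
    have hηb' : η (θ b) ∈ B.belowSet (θ v) := hηbij.mapsTo hθb
    have hca : (σ ∘ η ∘ θ) a ∈ A.belowSet v := (hσbij v hv).mapsTo hηa'
    have hcb : (σ ∘ η ∘ θ) b ∈ A.belowSet v := (hσbij v hv).mapsTo hηb'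
    have e1 : (A.subAt v).arcs ((σ ∘ η ∘ θ) a) ((σ ∘ η ∘ θ) b) =
        A.arcs ((σ ∘ η ∘ θ) a) ((σ ∘ η ∘ θ) b) := by
      show (if _ ∧ _ then _ else 0) = _
      rw [if_pos ⟨hca, hcb⟩]
    have e2 : (A.subAt u).arcs a b = A.arcs a b := by
      show (if _ ∧ _ then _ else 0) = _
      rw [if_pos ⟨ha', hb'⟩]
    have e3 : (B.subAt (θ v)).arcs (η (θ a)) (η (θ b)) = B.arcs (η (θ a)) (η (θ b)) := by
      show (if _ ∧ _ then _ else 0) = _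
      rw [if_pos ⟨hηa', hηb'⟩]
    have e4 : (B.subAt (θ u)).arcs (θ a) (θ b) = B.arcs (θ a) (θ b) := by
      show (if _ ∧ _ then _ else 0) = _
      rw [if_pos ⟨hθa, hθb⟩]
    have e5 := hηa _ hθa _ hθb
    rw [e3, e4] at e5
    have e6 : A.arcs ((σ ∘ η ∘ θ) a) ((σ ∘ η ∘ θ) b) = B.arcs (η (θ a)) (η (θ b)) := by
      show A.arcs (σ (η (θ a))) (σ (η (θ b))) = _
      exact harcs' _ (hbelB _ hηa') _ (hbelB _ hηb')
    rw [e1, e2, e6, e5, harcs _ (hbelA _ ha') _ (hbelA _ hb')]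
  · -- root
    show σ (η (θ u)) = v
    have : η (θ u) = θ v := hηr
    rw [this, hleft v hv]
  · -- labels
    intro x
    show (σ ∘ η ∘ θ) '' ((A.lab x ∩ A.belowSet u) ∩ A.belowSet u) =
      (A.lab x ∩ A.belowSet v) ∩ A.belowSet v
    rw [Set.inter_assoc, Set.inter_self, Set.inter_assoc, Set.inter_self]
    by_cases hx : x ∈ X
    · have himg1 : (σ ∘ η ∘ θ) '' (A.lab x ∩ A.belowSet u) =
          σ '' (η '' (θ '' (A.lab x ∩ A.belowSet u))) := by
        rw [Set.image_comp, Set.image_comp]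
      rw [himg1, hstep x hx u hu]
      have hη' : η '' (B.lab (e x) ∩ B.belowSet (θ u)) =
          B.lab (e x) ∩ B.belowSet (θ v) := by
        have := hηl (e x)
        show _ = _
        calc η '' (B.lab (e x) ∩ B.belowSet (θ u))
            = η '' ((B.lab (e x) ∩ B.belowSet (θ u)) ∩ B.belowSet (θ u)) := by
              rw [Set.inter_assoc, Set.inter_self]
          _ = (B.lab (e x) ∩ B.belowSet (θ v)) ∩ B.belowSet (θ v) := this
          _ = B.lab (e x) ∩ B.belowSet (θ v) := by rw [Set.inter_assoc, Set.inter_self]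
      rw [hη', ← hstep x hx v hv, hst _ (Set.inter_subset_right.trans (hbelA v))]
    · rw [hAoff x hx]
      simp

end MulIsoLemmas

section UnfoldLemmas

variable {V : Type u} {N : Net V} {X' : Set V}

lemma unfold_arcs_def (N : Net V) (X' : Set V) (z₁ z₂ : List (Arc V)) :
    (Net.unfoldNet N X').arcs z₁ z₂ =
      (if z₁ ∈ Net.unfoldVerts N ∧ z₂ ∈ Net.unfoldVerts N ∧
          ∃ r, r ≠ [] ∧ z₂ = z₁ ++ r ∧ ∀ a ∈ r.dropLast, N.IsHybrid (a : Arc V).2.1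
        then 1 else 0) := rfl

lemma unfold_append_mem {p q : List (Arc V)} (hp : p ∈ Net.unfoldVerts N)
    (hq : q ∈ Net.unfoldVerts N)
    (hend : Net.endOf N.root p = Net.endOf N.root q) (s : List (Arc V))
    (hs : p ++ s ∈ Net.unfoldVerts N) : q ++ s ∈ Net.unfoldVerts N := by
  obtain ⟨hw, htv⟩ := hs
  rw [walkFrom_append] at hw
  have hw2 := hw.2
  rw [hend] at hw2
  refine ⟨(walkFrom_append _ _ _ _).2 ⟨hq.1, hw2⟩, ?_⟩
  rw [endOf_append, ← hend, ← endOf_append]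
  exact htv

lemma unfold_arcs_translate {p q : List (Arc V)} (hp : p ∈ Net.unfoldVerts N)
    (hq : q ∈ Net.unfoldVerts N)
    (hend : Net.endOf N.root p = Net.endOf N.root q) (s s' : List (Arc V)) :
    (Net.unfoldNet N X').arcs (q ++ s) (q ++ s') =
      (Net.unfoldNet N X').arcs (p ++ s) (p ++ s') := by
  rw [unfold_arcs_def, unfold_arcs_def]
  have hcan : ∀ (t r : List (Arc V)), (t ++ s' = (t ++ s) ++ r) ↔ s' = s ++ r := by
    intro t r
    rw [List.append_assoc]
    exact ⟨fun h => List.append_cancel_left h, fun h => by rw [h]⟩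
  refine if_congr ⟨?_, ?_⟩ rfl rfl
  · rintro ⟨h1, h2, r, hr, he, hh⟩
    exact ⟨unfold_append_mem hq hp hend.symm s h1, unfold_append_mem hq hp hend.symm s' h2,
      r, hr, (hcan p r).2 ((hcan q r).1 he), hh⟩
  · rintro ⟨h1, h2, r, hr, he, hh⟩
    exact ⟨unfold_append_mem hp hq hend s h1, unfold_append_mem hp hq hend s' h2,
      r, hr, (hcan q r).2 ((hcan p r).1 he), hh⟩

lemma unfold_reach_translate :
    ∀ (l : List (Arc (List (Arc V)))) (p q : List (Arc V)),
      p ∈ Net.unfoldVerts N → q ∈ Net.unfoldVerts N →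
      Net.endOf N.root p = Net.endOf N.root q →
      (Net.unfoldNet N X').toNet.WalkFrom p l →
      ∃ s : List (Arc V),
        Net.endOf p l = p ++ s ∧ (Net.unfoldNet N X').toNet.Reaches q (q ++ s) := by
  intro l
  induction l with
  | nil =>
      intro p q hp hq hend _
      exact ⟨[], by rw [endOf_nil, List.append_nil],
        by rw [List.append_nil]; exact reaches_self hq⟩
  | cons a l ih =>
      intro p q hp hq hend hw
      rw [walkFrom_cons] at hw
      obtain ⟨hpv, ha1, ⟨hA, hB, hlt⟩, hw'⟩ := hw
      rw [unfold_arcs_def] at hlt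
      by_cases hcond : a.1 ∈ Net.unfoldVerts N ∧ a.2.1 ∈ Net.unfoldVerts N ∧
          ∃ r, r ≠ [] ∧ a.2.1 = a.1 ++ r ∧ ∀ b ∈ r.dropLast, N.IsHybrid (b : Arc V).2.1
      swap
      · rw [if_neg hcond] at hlt; omega
      obtain ⟨_, hp', r, hr, hpr, hhyb⟩ := hcond
      rw [ha1] at hpr
      have hq' : q ++ r ∈ Net.unfoldVerts N :=
        unfold_append_mem hp hq hend r (hpr ▸ hp')
      have hend' : Net.endOf N.root a.2.1 = Net.endOf N.root (q ++ r) := by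
        rw [hpr, endOf_append, endOf_append, hend]
      obtain ⟨s, hs1, hs2⟩ := ih a.2.1 (q ++ r) hp' hq' hend' hw'
      refine ⟨r ++ s, ?_, ?_⟩
      · rw [endOf_cons, hs1, hpr, List.append_assoc]
      · have hstep : (Net.unfoldNet N X').toNet.Reaches q (q ++ r) := by
          refine ⟨[(q, (q ++ r, 0))], ?_, ?_⟩
          · rw [walkFrom_cons]
            refine ⟨hq, rfl, ⟨hq, hq', ?_⟩, (walkFrom_nil _ _).2 hq'⟩
            show 0 < (Net.unfoldNet N X').arcs q (q ++ r)
            rw [unfold_arcs_def, if_pos ⟨hq, hq', r, hr, rfl, hhyb⟩]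
            exact Nat.zero_lt_one
          · rw [endOf_cons, endOf_nil]
        rw [← List.append_assoc q r s]
        exact reaches_trans hstep hs2

lemma unfold_subAt_iso {p q : List (Arc V)} (hp : p ∈ Net.unfoldVerts N)
    (hq : q ∈ Net.unfoldVerts N)
    (hend : Net.endOf N.root p = Net.endOf N.root q) :
    LNet.MulIso ((Net.unfoldNet N X').subAt p) ((Net.unfoldNet N X').subAt q) := by
  set U := Net.unfoldNet N X' with hU
  have hdec : ∀ {p' q' : List (Arc V)}, p' ∈ Net.unfoldVerts N → q' ∈ Net.unfoldVerts N →
      Net.endOf N.root p' = Net.endOf N.root q' →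
      ∀ z ∈ U.belowSet p', ∃ s, z = p' ++ s ∧ U.toNet.Reaches q' (q' ++ s) := by
    intro p' q' hp' hq' hend' z hz
    obtain ⟨l, hl, rfl⟩ := hz
    obtain ⟨s, hs1, hs2⟩ := unfold_reach_translate l p' q' hp' hq' hend' hl
    exact ⟨s, hs1, hs2⟩
  set g : List (Arc V) → List (Arc V) := fun z => q ++ z.drop p.length with hg
  have hgval : ∀ s : List (Arc V), g (p ++ s) = q ++ s := by
    intro s; rw [hg]; simp only [List.drop_left]
  have hg'val : ∀ s : List (Arc V), p ++ ((q ++ s).drop q.length) = p ++ s := by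
    intro s; simp only [List.drop_left]
  have hmapsTo : ∀ z ∈ U.belowSet p, g z ∈ U.belowSet q := by
    intro z hz
    obtain ⟨s, rfl, hre⟩ := hdec hp hq hend z hz
    rw [hgval]; exact hre
  refine ⟨g, ⟨hmapsTo, ?_, ?_⟩, ?_, ?_, ?_⟩
  · -- InjOn
    intro z₁ h₁ z₂ h₂ he
    obtain ⟨s₁, rfl, -⟩ := hdec hp hq hend z₁ h₁
    obtain ⟨s₂, rfl, -⟩ := hdec hp hq hend z₂ h₂
    rw [hgval, hgval] at he
    rw [List.append_cancel_left he]
  · -- SurjOn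
    intro y hy
    obtain ⟨s, rfl, hre⟩ := hdec hq hp hend.symm y hy
    exact ⟨p ++ s, hre, hgval s⟩
  · -- arcs
    intro z₁ h₁ z₂ h₂
    have h₁' : z₁ ∈ U.belowSet p := h₁
    have h₂' : z₂ ∈ U.belowSet p := h₂
    obtain ⟨s₁, rfl, -⟩ := hdec hp hq hend z₁ h₁'
    obtain ⟨s₂, rfl, -⟩ := hdec hp hq hend z₂ h₂'
    have e1 : (U.subAt q).arcs (g (p ++ s₁)) (g (p ++ s₂)) =
        U.arcs (g (p ++ s₁)) (g (p ++ s₂)) := by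
      show (if _ ∧ _ then _ else 0) = _
      rw [if_pos ⟨hmapsTo _ h₁', hmapsTo _ h₂'⟩]
    have e2 : (U.subAt p).arcs (p ++ s₁) (p ++ s₂) = U.arcs (p ++ s₁) (p ++ s₂) := by
      show (if _ ∧ _ then _ else 0) = _
      rw [if_pos ⟨h₁', h₂'⟩]
    rw [e1, e2, hgval, hgval]
    exact unfold_arcs_translate hp hq hend s₁ s₂
  · -- root
    show g p = q
    rw [hg]
    simp only [List.drop_length, List.append_nil]
  · -- labels
    intro x
    show g '' ((U.lab x ∩ U.belowSet p) ∩ U.belowSet p) =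
      (U.lab x ∩ U.belowSet q) ∩ U.belowSet q
    rw [Set.inter_assoc, Set.inter_self, Set.inter_assoc, Set.inter_self]
    have hlabdef : U.lab x =
        if x ∈ X' then {r ∈ Net.unfoldVerts N | Net.endOf N.root r = x} else ∅ := rfl
    by_cases hx : x ∈ X'
    swap
    · rw [hlabdef, if_neg hx]; simp
    rw [hlabdef, if_pos hx]
    apply Set.Subset.antisymm
    · rintro _ ⟨z, ⟨⟨hzv, hze⟩, hzb⟩, rfl⟩
      obtain ⟨s, rfl, hre⟩ := hdec hp hq hend z hzb
      rw [hgval]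
      refine ⟨⟨reaches_mem_verts hre, ?_⟩, hre⟩
      rw [endOf_append, ← hend, ← endOf_append]
      exact hze
    · rintro y ⟨⟨hyv, hye⟩, hyb⟩
      obtain ⟨s, rfl, hre⟩ := hdec hq hp hend.symm y hyb
      refine ⟨p ++ s, ⟨⟨reaches_mem_verts hre, ?_⟩, hre⟩, hgval s⟩
      rw [endOf_append, hend, ← endOf_append]
      exact hye

end UnfoldLemmas

lemma mem_unfoldVerts {V : Type u} {N : Net V} {p : List (Arc V)} :
    p ∈ Net.unfoldVerts N ↔
      N.WalkFrom N.root p ∧ N.IsTreeVert (Net.endOf N.root p) := Iff.rfl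

lemma inr_not_treeVert {V : Type u} {L : Type v} {X : Set L} {M : LNet V L}
    (hphylo : Net.IsPhyloNetwork M.foldUp (M.foldX X)) {c : Set V}
    (hc : (Sum.inr c : Set V ⊕ Set V) ∈ M.foldUp.verts) :
    ¬ M.foldUp.IsTreeVert (Sum.inr c) := by
  have hcc : M.IsClassOf c ∧ M.ClassHyb c := by
    rcases hc with h | h
    · obtain ⟨d, -, hd⟩ := h
      exact absurd hd (by simp)
    · obtain ⟨d, hd, hde⟩ := h
      have : d = c := by injection hde
      subst this
      exact hd
  have hout : M.foldUp.outDeg (Sum.inr c) = 1 := by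
    unfold Net.outDeg
    rw [finsum_eq_single _ (Sum.inl c : Set V ⊕ Set V) ?_]
    · show (if c = c ∧ M.IsClassOf c ∧ M.ClassHyb c then 1 else 0) = 1
      rw [if_pos ⟨rfl, hcc.1, hcc.2⟩]
    · intro b hb
      rcases b with c' | c'
      · show (if c' = c ∧ M.IsClassOf c ∧ M.ClassHyb c then 1 else 0) = 0
        rw [if_neg]
        rintro ⟨rfl, -⟩
        exact hb rfl
      · rfl
  rintro ⟨hv, hdeg⟩
  have h2 := hphylo.treeOutDeg _ hv hdeg (by rw [hout]; exact one_ne_zero)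
  rw [hout] at h2
  omega

/-- Let `M` be a sound MUL-tree on `X` and let `u, v` be
vertices of `M`.  Then `u ∼ v` if and only if the directed paths
`Ψ_{F(M)}⁻¹(u)` and `Ψ_{F(M)}⁻¹(v)` in `F(M)` have the same end vertex
(which is necessarily a tree vertex of `F(M)`).

Here the identification of `M` with `U(F(M))` is realized by an arbitrary
MUL-tree isomorphism `θ : M → U(F(M))`; since `Ψ_{F(M)}` is the identity on
paths in this formalization, the path `Ψ_{F(M)}⁻¹(u)` is `θ u`. -/
theorem sound_sim_iff_same_end {V : Type u} {L : Type v} (X : Set L)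
    (M : LNet V L) (hX : 3 ≤ X.ncard) (hM : M.IsSound X)
    (θ : V → List (Arc (Set V ⊕ Set V)))
    (hθ : LNet.MulIsoRelVia M X (Net.unfoldNet M.foldUp (M.foldX X))
      (fun x => Sum.inl (M.labClass x)) θ)
    (u v : V) (hu : u ∈ M.verts) (hv : v ∈ M.verts) :
    M.Sim u v ↔
      (Net.endOf M.foldUp.root (θ u) = Net.endOf M.foldUp.root (θ v) ∧
        M.foldUp.IsTreeVert (Net.endOf M.foldUp.root (θ u))) := by
  classical
  obtain ⟨hmul, hphylo⟩ := hM
  obtain ⟨hbij, harcs, hroot, hlab⟩ := hθ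
  set N := M.foldUp with hN
  set E : V → (Set V ⊕ Set V) := fun w => Net.endOf N.root (θ w) with hE
  have hmemθ : ∀ w ∈ M.verts, θ w ∈ Net.unfoldVerts N := fun w hw => hbij.mapsTo hw
  have htv : ∀ w ∈ M.verts, N.IsTreeVert (E w) := fun w hw =>
    (mem_unfoldVerts.1 (hmemθ w hw)).2
  have hAoff : ∀ x ∉ X, M.lab x = ∅ := hmul.labOff
  have hkey : ∀ w w', w ∈ M.verts → w' ∈ M.verts → E w = E w' → M.Sim w w' := by
    intro w w' hw hw' he
    have h1 := unfold_subAt_iso (N := N) (X' := M.foldX X)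
      (hmemθ w hw) (hmemθ w' hw') he
    exact Or.inr (subAt_iso_transport hbij harcs hlab hAoff hw hw' h1)
  constructor
  swap
  · rintro ⟨he, -⟩
    exact hkey u v hu hv he
  · intro hsim
    refine ⟨?_, htv u hu⟩
    set T : Set (Set V ⊕ Set V) := {t | N.IsTreeVert t} with hT
    set CS : Set (Set V) := M.classSet with hCS
    have hsurjT : ∀ t ∈ T, ∃ w ∈ M.verts, E w = t := by
      intro t ht
      obtain ⟨l, hl, hle⟩ := hphylo.connected t ht.1
      have hp : l ∈ Net.unfoldVerts N := mem_unfoldVerts.2 ⟨hl, by rw [hle]; exact ht⟩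
      obtain ⟨w, hw, rfl⟩ := hbij.surjOn hp
      exact ⟨w, hw, hle⟩
    set f : (Set V ⊕ Set V) → Set V := fun t =>
      if h : ∃ w ∈ M.verts, E w = t then M.eqClass h.choose else ∅ with hf
    have hfval : ∀ w ∈ M.verts, f (E w) = M.eqClass w := by
      intro w hw
      have h : ∃ w' ∈ M.verts, E w' = E w := ⟨w, hw, rfl⟩
      have hfv : f (E w) = M.eqClass h.choose := by
        rw [hf]; exact dif_pos h
      rw [hfv]
      obtain ⟨hw0, he0⟩ := h.choose_spec
      exact eqClass_eq_of_sim hw0 hw (hkey _ _ hw0 hw he0)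
    have hMfin : M.verts.Finite := hmul.pseudo.finite
    have hCSfin : CS.Finite := hMfin.image _
    have hTfin : T.Finite := hphylo.finite.subset (fun t ht => ht.1)
    have hTsub : T ⊆ Sum.inl '' CS := by
      intro t ht
      rcases (ht.1 : t ∈ N.verts) with h | h
      · obtain ⟨c, hc, rfl⟩ := h
        obtain ⟨w, hw, rfl⟩ := hc
        exact ⟨M.eqClass w, ⟨w, hw, rfl⟩, rfl⟩
      · obtain ⟨c, hc, rfl⟩ := h
        exact absurd ht (inr_not_treeVert hphylo (Or.inr ⟨c, hc, rfl⟩))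
    have hcard : T.ncard ≤ CS.ncard := by
      calc T.ncard ≤ (Sum.inl '' CS).ncard :=
            Set.ncard_le_ncard hTsub (hCSfin.image _)
        _ = CS.ncard := Set.ncard_image_of_injective _ Sum.inl_injective
    have hmapsTo : ∀ t ∈ T, f t ∈ CS := by
      intro t ht
      obtain ⟨w, hw, rfl⟩ := hsurjT t ht
      rw [hfval w hw]
      exact ⟨w, hw, rfl⟩
    have hsurjf : ∀ c ∈ CS, ∃ t, ∃ ht : t ∈ T, f t = c := by
      rintro c ⟨w, hw, rfl⟩
      exact ⟨E w, htv w hw, hfval w hw⟩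
    have hinj : ∀ t₁ ∈ T, ∀ t₂ ∈ T, f t₁ = f t₂ → t₁ = t₂ := by
      intro t₁ h₁ t₂ h₂ he
      exact Set.inj_on_of_surj_on_of_ncard_le (fun t _ => f t)
        (fun t ht => hmapsTo t ht) hsurjf hcard h₁ h₂ he hTfin
    have h3 : M.eqClass u = M.eqClass v := by
      rcases hsim with rfl | hiso
      · rfl
      · exact eqClass_eq_of_sim hu hv (Or.inr hiso)
    show E u = E v
    exact hinj (E u) (htv u hu) (E v) (htv v hv)
      (by rw [hfval u hu, hfval v hv, h3])

end Phylo
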